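/- Let k ≥ 0, γ₁, γ₂ ∈ (0,∞). For every c₁ > 0, c₂ > 1 there is a constant C > 0 (depending on d, k, γ₂, c₁, c₂) such that for all t > 0 and x, z ∈ ℝ^d with |z| ≤ max(c₁ · t^{(d+k+γ₁)/(γ₁(d+k+γ₂))}, |x|/c₂), one has ϱ^{(k)}_{γ₁,γ₂}(t, x+z) ≤ C · ϱ^{(k)}_{γ₁,γ₂}(t, x). -/

import Mathlib

open scoped ENNReal

noncomputable def rho (d : ℕ) (k γ₁ γ₂ t : ℝ) (x : EuclideanSpace ℝ (Fin d)) : ℝ≥0∞ :=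
  min (ENNReal.ofReal t ^ (-((d : ℝ) + k) / γ₁))
    (ENNReal.ofReal t / ENNReal.ofReal ‖x‖ ^ ((d : ℝ) + k + γ₂))

lemma min_le_mul_min' {K a b' b : ℝ≥0∞} (h1 : a ≤ K * a) (h2 : min a b' ≤ K * b) :
    min a b' ≤ K * min a b := by
  rcases le_total a b with h | h
  · rw [min_eq_left h]
    exact le_trans (min_le_left _ _) h1
  · rw [min_eq_right h]
    exact h2

theorem stmt_5 (d : ℕ) (hd : 1 ≤ d) (k γ₁ γ₂ : ℝ) (hk : 0 ≤ k)
    (h₁ : 0 < γ₁) (h₂ : 0 < γ₂) (c₁ c₂ : ℝ) (hc₁ : 0 < c₁) (hc₂ : 1 < c₂) :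
    ∃ C : ℝ, 0 < C ∧ ∀ t : ℝ, 0 < t → ∀ x z : EuclideanSpace ℝ (Fin d),
      ‖z‖ ≤ max (c₁ * t ^ (((d : ℝ) + k + γ₁) / (γ₁ * ((d : ℝ) + k + γ₂)))) (‖x‖ / c₂) →
        rho d k γ₁ γ₂ t (x + z) ≤ ENNReal.ofReal C * rho d k γ₁ γ₂ t x := by
  have hd1 : (1:ℝ) ≤ (d:ℝ) := by exact_mod_cast hd
  set β : ℝ := (d:ℝ) + k + γ₂ with hβdef
  have hβ : 0 < β := by simp only [hβdef]; linarith
  have hc₂0 : (0:ℝ) < c₂ := lt_trans one_pos hc₂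
  set m : ℝ := 1 - 1/c₂ with hmdef
  have hm0 : 0 < m := by
    have h : 1/c₂ < 1 := by rw [div_lt_one hc₂0]; exact hc₂
    simp only [hmdef]; linarith
  set C : ℝ := max 1 (max (m ^ (-β)) ((c₁ * c₂) ^ β)) with hCdef
  have hC1 : (1:ℝ) ≤ C := le_max_left _ _
  refine ⟨C, lt_of_lt_of_le one_pos hC1, ?_⟩
  intro t ht x z hz
  set K : ℝ≥0∞ := ENNReal.ofReal C with hKdef
  have hK1 : (1:ℝ≥0∞) ≤ K := by
    rw [hKdef, show (1:ℝ≥0∞) = ENNReal.ofReal 1 by simp]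
    exact ENNReal.ofReal_le_ofReal hC1
  set T : ℝ≥0∞ := ENNReal.ofReal t with hTdef
  have hT0 : T ≠ 0 := ne_of_gt (ENNReal.ofReal_pos.mpr ht)
  have hTtop : T ≠ ⊤ := ENNReal.ofReal_ne_top
  set e : ℝ := -((d:ℝ) + k) / γ₁ with hedef
  rw [rho, rho, ← hβdef, ← hedef, ← hTdef]
  set X : ℝ≥0∞ := ENNReal.ofReal ‖x‖ with hXdef
  set Y : ℝ≥0∞ := ENNReal.ofReal ‖x + z‖ with hYdef
  clear_value m C K T X Y
  have ha1 : T ^ e ≤ K * T ^ e := le_mul_of_one_le_left zero_le hK1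
  apply min_le_mul_min' ha1
  rcases le_or_gt ‖z‖ (‖x‖ / c₂) with hz1 | hz2
  · -- Case 1 : |z| ≤ |x|/c₂
    have hxz : m * ‖x‖ ≤ ‖x + z‖ := by
      have h := norm_add_le (x + z) (-z)
      simp only [add_neg_cancel_right, norm_neg] at h
      have : ‖x‖ / c₂ = (1/c₂) * ‖x‖ := by ring
      rw [this] at hz1
      have hm' : m * ‖x‖ = ‖x‖ - 1 / c₂ * ‖x‖ := by rw [hmdef]; ring
      linarith [hm', h, hz1]
    have hA0 : (ENNReal.ofReal m) ^ β ≠ 0 := by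
      simp [ENNReal.rpow_eq_zero_iff, ENNReal.ofReal_eq_zero, not_le, hm0, hβ, hβ.le,
        not_lt.mpr hβ.le]
    have hAtop : (ENNReal.ofReal m) ^ β ≠ ⊤ :=
      ENNReal.rpow_ne_top_of_nonneg hβ.le ENNReal.ofReal_ne_top
    have hYX : (ENNReal.ofReal m) ^ β * X ^ β ≤ Y ^ β := by
      calc (ENNReal.ofReal m) ^ β * X ^ β = (ENNReal.ofReal m * X) ^ β :=
            (ENNReal.mul_rpow_of_nonneg _ _ hβ.le).symm
        _ = (ENNReal.ofReal (m * ‖x‖)) ^ β := by rw [hXdef, ENNReal.ofReal_mul hm0.le]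
        _ ≤ Y ^ β := by rw [hYdef]; exact ENNReal.rpow_le_rpow (ENNReal.ofReal_le_ofReal hxz) hβ.le
    have hinv : ((ENNReal.ofReal m) ^ β)⁻¹ ≤ K := by
      rw [← ENNReal.rpow_neg, ENNReal.ofReal_rpow_of_pos hm0, hKdef, hCdef]
      exact ENNReal.ofReal_le_ofReal (le_trans (le_max_left _ _) (le_max_right _ _))
    calc min (T ^ e) (T / Y ^ β) ≤ T / Y ^ β := min_le_right _ _
      _ ≤ T / ((ENNReal.ofReal m) ^ β * X ^ β) := ENNReal.div_le_div le_rfl hYX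
      _ = ((ENNReal.ofReal m) ^ β)⁻¹ * (T / X ^ β) := by
          rw [div_eq_mul_inv, div_eq_mul_inv, ENNReal.mul_inv (Or.inl hA0) (Or.inl hAtop)]
          ring
      _ ≤ K * (T / X ^ β) := mul_le_mul_left hinv _
  · -- Case 2 : |x| < c₂ |z| ≤ c₁ c₂ t^θ
    set θ : ℝ := ((d:ℝ) + k + γ₁) / (γ₁ * β) with hθdef
    clear_value θ
    have htθ : 0 < t ^ θ := Real.rpow_pos_of_pos ht _
    have hzθ : ‖z‖ ≤ c₁ * t ^ θ := by
      rcases le_max_iff.mp hz with h | h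
      · exact h
      · linarith
    have hx : ‖x‖ ≤ c₁ * c₂ * t ^ θ := by
      have h : ‖x‖ / c₂ ≤ c₁ * t ^ θ := le_trans hz2.le hzθ
      rw [div_le_iff₀ hc₂0] at h
      linarith [h]
    have hθβ : θ * β = 1 - e := by
      rw [hθdef, hedef]
      field_simp
      ring
    have hXtop : X ^ β ≠ ⊤ := by rw [hXdef]; exact ENNReal.rpow_ne_top_of_nonneg hβ.le ENNReal.ofReal_ne_top
    have hKT0 : K * T ≠ 0 := by
      simp [hKdef, hT0, ENNReal.ofReal_eq_zero, not_le]
      positivity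
    have hKTtop : K * T ≠ ⊤ := by rw [hKdef]; exact ENNReal.mul_ne_top ENNReal.ofReal_ne_top hTtop
    have key : T ^ e * X ^ β ≤ K * T := by
      have hX : X ^ β ≤ ENNReal.ofReal ((c₁ * c₂) ^ β * t ^ (1 - e)) := by
        calc X ^ β ≤ (ENNReal.ofReal (c₁ * c₂ * t ^ θ)) ^ β := by
              rw [hXdef]; exact ENNReal.rpow_le_rpow (ENNReal.ofReal_le_ofReal hx) hβ.le
          _ = ENNReal.ofReal ((c₁ * c₂ * t ^ θ) ^ β) := by
              rw [ENNReal.ofReal_rpow_of_pos (by positivity)]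
          _ = ENNReal.ofReal ((c₁ * c₂) ^ β * t ^ (1 - e)) := by
              rw [Real.mul_rpow (by positivity) htθ.le, ← Real.rpow_mul ht.le, hθβ]
      have hTe : T ^ e = ENNReal.ofReal (t ^ e) := by rw [hTdef]; exact ENNReal.ofReal_rpow_of_pos ht
      calc T ^ e * X ^ β ≤ ENNReal.ofReal (t ^ e) * ENNReal.ofReal ((c₁ * c₂) ^ β * t ^ (1 - e)) := by
            rw [← hTe]; exact mul_le_mul_right hX _
        _ = ENNReal.ofReal ((c₁ * c₂) ^ β * (t ^ e * t ^ (1 - e))) := by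
            rw [← ENNReal.ofReal_mul (Real.rpow_nonneg ht.le _)]; ring_nf
        _ = ENNReal.ofReal ((c₁ * c₂) ^ β * t) := by
            rw [← Real.rpow_add ht]; norm_num
        _ = ENNReal.ofReal ((c₁ * c₂) ^ β) * T := by rw [hTdef]; exact ENNReal.ofReal_mul (by positivity)
        _ ≤ K * T := by
            rw [hKdef, hCdef]
            exact mul_le_mul_left
              (ENNReal.ofReal_le_ofReal (le_trans (le_max_right _ _) (le_max_right _ _))) _
    calc min (T ^ e) (T / Y ^ β) ≤ T ^ e := min_le_left _ _
      _ ≤ K * (T / X ^ β) := by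
          rw [← mul_div_assoc]
          exact (ENNReal.le_div_iff_mul_le (Or.inr hKT0) (Or.inl hXtop)).mpr key
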